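/- (Lemma 2.3) In the generalized matrix ring setting, if φ : R → R is an additive map satisfying condition (P), then e·φ(f)·e = 0 and f·φ(e)·f = 0, where f = 1 − e. -/
import Mathlib


theorem corner_of_phi_idempotents_vanish
    {R : Type*} [Ring R] (e : R) (he : e * e = e)
    (h2A : ∀ x : R, e * x * e + e * x * e = 0 → e * x * e = 0)
    (h2B : ∀ x : R, (1 - e) * x * (1 - e) + (1 - e) * x * (1 - e) = 0 →
      (1 - e) * x * (1 - e) = 0)
    (hlf : ∀ a : R, a = e * a * e → (∀ x : R, a * (e * x * (1 - e)) = 0) → a = 0)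
    (hrf : ∀ b : R, b = (1 - e) * b * (1 - e) → (∀ x : R, (e * x * (1 - e)) * b = 0) → b = 0)
    (φ : R →+ R)
    (hP : ∀ U V : R, U * V = 0 → V * U = 0 →
      φ U * V + V * φ U + U * φ V + φ V * U = 0) :
    e * φ (1 - e) * e = 0 ∧ (1 - e) * φ e * (1 - e) = 0 := by
  have hef : e * (1 - e) = 0 := by rw [mul_sub, mul_one, he, sub_self]
  have hfe : (1 - e) * e = 0 := by rw [sub_mul, one_mul, he, sub_self]
  have hff : (1 - e) * (1 - e) = 1 - e := by
    rw [sub_mul, one_mul, mul_sub, mul_one, he, sub_self, sub_zero]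
  have hef' : ∀ y : R, e * ((1 - e) * y) = 0 := fun y => by
    rw [← mul_assoc, hef, zero_mul]
  have hfe' : ∀ y : R, (1 - e) * (e * y) = 0 := fun y => by
    rw [← mul_assoc, hfe, zero_mul]
  have he' : ∀ y : R, e * (e * y) = e * y := fun y => by rw [← mul_assoc, he]
  have hf' : ∀ y : R, (1 - e) * ((1 - e) * y) = (1 - e) * y := fun y => by
    rw [← mul_assoc, hff]
  have key := hP e (1 - e) hef hfe
  constructor
  · apply h2A (φ (1 - e))
    have h := congrArg (fun x => e * (x * e)) key
    simp only [mul_add, add_mul, mul_assoc, he, hff, hef, hfe, hef', hfe', he', hf',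
      mul_zero, zero_mul, add_zero, zero_add, mul_one] at h
    simp only [mul_assoc]
    exact h
  · apply h2B (φ e)
    have h := congrArg (fun x => (1 - e) * (x * (1 - e))) key
    simp only [mul_add, add_mul, mul_assoc, he, hff, hef, hfe, hef', hfe', he', hf',
      mul_zero, zero_mul, add_zero, zero_add, mul_one] at h
    simp only [mul_assoc]
    exact h
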